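/- For every positive integer L and every j in {0,...,2L-1}, the sum ∑_{l=0}^{L-1} (1/(2l+1)) · sin((2j+1)(2l+1)π/(4L)) equals (1/(4L)) · ∫_0^{(j+1/2)π} sin(u)/sin(u/(2L)) du. -/

import Mathlib

open MeasureTheory

lemma dirich (v : ℝ) (n : ℕ) :
    ∑ l ∈ Finset.range n, 2 * Real.sin v * Real.cos ((2 * (l:ℝ) + 1) * v)
      = Real.sin (2 * (n:ℝ) * v) := by
  induction n with
  | zero => simp
  | succ n ih =>
    rw [Finset.sum_range_succ, ih]
    have h1 : 2 * ((n:ℝ) + 1) * v = (2 * (n:ℝ) + 1) * v + v := by ring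
    have h2 : 2 * (n:ℝ) * v = (2 * (n:ℝ) + 1) * v - v := by ring
    push_cast
    rw [h1, h2, Real.sin_add, Real.sin_sub]
    ring

theorem sum_eq_integral (L : ℕ) (hL : 1 ≤ L) (j : ℕ) (hj : j < 2 * L) :
    ∑ l ∈ Finset.range L, (1 / (2 * (l : ℝ) + 1)) *
      Real.sin ((2 * (j : ℝ) + 1) * (2 * (l : ℝ) + 1) * Real.pi / (4 * (L : ℝ)))
      = (1 / (4 * (L : ℝ))) *
        ∫ u in (0:ℝ)..(((j : ℝ) + 1/2) * Real.pi),
          Real.sin u / Real.sin (u / (2 * (L : ℝ))) := by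
  have hLpos : (0:ℝ) < L := by exact_mod_cast hL
  set T : ℝ := ((j : ℝ) + 1/2) * Real.pi with hTdef
  have hTpos : 0 < T := by positivity
  have hjR : (j:ℝ) + 1/2 < 2 * L := by
    have : (j:ℝ) + 1 ≤ 2 * L := by exact_mod_cast hj
    linarith
  -- pointwise identity on (0, T]
  have key : ∀ u ∈ Set.Ioc (0:ℝ) T,
      Real.sin u / Real.sin (u / (2 * (L:ℝ)))
        = ∑ l ∈ Finset.range L, 2 * Real.cos ((2 * (l:ℝ) + 1) * (u / (2 * (L:ℝ)))) := by
    intro u hu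
    set v := u / (2 * (L:ℝ)) with hv
    have hvpos : 0 < v := div_pos hu.1 (by positivity)
    have hvlt : v < Real.pi := by
      rw [hv, div_lt_iff₀ (by positivity)]
      calc u ≤ T := hu.2
        _ = ((j:ℝ) + 1/2) * Real.pi := rfl
        _ < Real.pi * (2 * L) := by
            rw [mul_comm]
            exact mul_lt_mul_of_pos_left hjR Real.pi_pos
    have hsv : Real.sin v ≠ 0 := ne_of_gt (Real.sin_pos_of_pos_of_lt_pi hvpos hvlt)
    have hu_eq : u = 2 * (L:ℝ) * v := by
      rw [hv]; field_simp
    rw [hu_eq, ← dirich v L]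
    rw [div_eq_iff hsv, Finset.sum_mul]
    exact Finset.sum_congr rfl fun l _ => by ring
  have hcong : (∫ u in (0:ℝ)..T, Real.sin u / Real.sin (u / (2 * (L:ℝ))))
      = ∫ u in (0:ℝ)..T, ∑ l ∈ Finset.range L,
          2 * Real.cos ((2 * (l:ℝ) + 1) * (u / (2 * (L:ℝ)))) := by
    apply intervalIntegral.integral_congr_ae
    refine Filter.Eventually.of_forall (fun u hu => ?_)
    rw [Set.uIoc_of_le hTpos.le] at hu
    exact key u hu
  have hint : ∀ l ∈ Finset.range L, IntervalIntegrable
      (fun u => 2 * Real.cos ((2 * (l:ℝ) + 1) * (u / (2 * (L:ℝ))))) volume 0 T :=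
    fun l _ => (by fun_prop : Continuous fun u : ℝ =>
      2 * Real.cos ((2 * (l:ℝ) + 1) * (u / (2 * (L:ℝ))))).intervalIntegrable 0 T
  rw [hcong, intervalIntegral.integral_finset_sum hint, Finset.mul_sum]
  refine Finset.sum_congr rfl (fun l _ => ?_)
  have hc : (0:ℝ) < 2 * (l:ℝ) + 1 := by positivity
  have hderiv : ∀ u : ℝ, HasDerivAt
      (fun u => (4 * (L:ℝ) / (2 * (l:ℝ) + 1)) * Real.sin ((2 * (l:ℝ) + 1) * (u / (2 * (L:ℝ)))))
      (2 * Real.cos ((2 * (l:ℝ) + 1) * (u / (2 * (L:ℝ))))) u := by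
    intro u
    have h1 : HasDerivAt (fun u : ℝ => (2 * (l:ℝ) + 1) * (u / (2 * (L:ℝ))))
        ((2 * (l:ℝ) + 1) / (2 * (L:ℝ))) u := by
      have h0 := ((hasDerivAt_id u).div_const (2 * (L:ℝ))).const_mul (2 * (l:ℝ) + 1)
      rw [mul_one_div] at h0
      exact h0
    have h2 := (Real.hasDerivAt_sin _).comp u h1
    have h3 := h2.const_mul (4 * (L:ℝ) / (2 * (l:ℝ) + 1))
    refine h3.congr_deriv ?_
    field_simp
    ring
  rw [intervalIntegral.integral_eq_sub_of_hasDerivAt (fun u _ => hderiv u)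
    ((by fun_prop : Continuous fun u : ℝ =>
      2 * Real.cos ((2 * (l:ℝ) + 1) * (u / (2 * (L:ℝ))))).intervalIntegrable 0 T)]
  have hTv : (2 * (l:ℝ) + 1) * (T / (2 * (L:ℝ)))
      = (2 * (j : ℝ) + 1) * (2 * (l : ℝ) + 1) * Real.pi / (4 * (L : ℝ)) := by
    rw [hTdef]; field_simp; ring
  simp [hTv]
  field_simp
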